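/- Let α be an infinite limit ordinal of countable cofinality and Y = α+1 with the order topology. Then the homeomorphism group Homeo(Y), with the topology of uniform convergence, contains a countably infinite subset that is not closed; specifically, there is a sequence of transpositions of pairs of isolated points converging to the identity but never equal to the identity. -/

import Mathlib

open Ordinal Cardinal

/-- Swapping two isolated points in a T1 space is continuous. -/
lemma swap_continuous_aux {X : Type*} [TopologicalSpace X] [T1Space X] [DecidableEq X] {p q : X}
    (hp : IsOpen ({p} : Set X)) (hq : IsOpen ({q} : Set X)) :
    Continuous (Equiv.swap p q) := by
  rw [continuous_def]
  intro U hU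
  have hpq : IsClosed ({p, q} : Set X) := (Set.finite_singleton q).insert p |>.isClosed
  have key : (Equiv.swap p q) ⁻¹' U =
      (U \ {p, q}) ∪ ((Equiv.swap p q) ⁻¹' U ∩ {p, q}) := by
    ext x
    by_cases hx : x ∈ ({p, q} : Set X)
    · simp [hx]
    · have hxp : x ≠ p := fun h => hx (by simp [h])
      have hxq : x ≠ q := fun h => hx (by simp [h])
      simp [Set.mem_preimage, Equiv.swap_apply_of_ne_of_ne hxp hxq, hx]
  rw [key]
  refine (hU.sdiff hpq).union ?_
  rw [isOpen_iff_mem_nhds]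
  rintro x ⟨hx1, hx2⟩
  rcases hx2 with h | h
  · subst h
    exact Filter.mem_of_superset (hp.mem_nhds rfl)
      (by rintro y rfl; exact ⟨hx1, Or.inl rfl⟩)
  · rw [Set.mem_singleton_iff] at h; subst h
    exact Filter.mem_of_superset (hq.mem_nhds rfl)
      (by rintro y rfl; exact ⟨hx1, Or.inr rfl⟩)

/-- In `[0, α]`, the point `b + 1` (with `b + 2 ≤ α`) is isolated. -/
lemma isOpen_singleton_succ_aux {α b : Ordinal} (hb : b + 1 ≤ α) :
    IsOpen ({(⟨b + 1, hb⟩ : Set.Iic α)} : Set (Set.Iic α)) := by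
  have : ({(⟨b + 1, hb⟩ : Set.Iic α)} : Set (Set.Iic α))
      = Subtype.val ⁻¹' Set.Ioo b (b + 2) := by
    ext x
    simp only [Set.mem_singleton_iff, Set.mem_preimage, Set.mem_Ioo, Subtype.ext_iff]
    constructor
    · rintro h
      rw [h]
      constructor
      · rw [add_one_eq_succ]; exact Order.lt_succ b
      · have : b + 2 = (b + 1) + 1 := by rw [add_assoc]; norm_num
        rw [this, add_one_eq_succ (b+1)]
        exact Order.lt_succ _
    · rintro ⟨h1, h2⟩
      have h2' : (x : Ordinal) ≤ b + 1 := by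
        have : b + 2 = (b + 1) + 1 := by rw [add_assoc]; norm_num
        rw [this, add_one_eq_succ (b+1), Order.lt_succ_iff] at h2
        exact h2
      have h1' : b + 1 ≤ (x : Ordinal) := by
        rw [add_one_eq_succ, Order.succ_le_iff]; exact h1
      exact le_antisymm h2' h1'
  rw [this]
  exact isOpen_Ioo.preimage continuous_subtype_val

/-- A homeomorphism of `[0, α]` that transposes the two isolated points `a + 1` and `a + 2`
(for some `a < α`) and fixes every other point. -/
def IsTransposition {α : Ordinal} (f : Set.Iic α ≃ₜ Set.Iic α) : Prop :=
  ∃ a < α, ∀ x : Set.Iic α,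
    (f x : Ordinal) = if (x : Ordinal) = a + 1 then a + 2
      else if (x : Ordinal) = a + 2 then a + 1 else (x : Ordinal)

theorem stmt4 (α : Ordinal) (hα : Order.IsSuccLimit α) (hcof : α.cof = ℵ₀) :
    ∃ f : ℕ → (Set.Iic α ≃ₜ Set.Iic α),
      Function.Injective f ∧
      (∀ n, IsTransposition (f n)) ∧
      (∀ n, f n ≠ Homeomorph.refl (Set.Iic α)) ∧
      (∀ U ∈ nhdsSet (Set.diagonal (Set.Iic α)),
        ∃ N : ℕ, ∀ n ≥ N, ∀ x : Set.Iic α, (f n x, x) ∈ U) := by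
  classical
  -- a cofinal ℕ-indexed family
  obtain ⟨ι, g0, hlsub, hmk⟩ := Ordinal.exists_lsub_cof α
  rw [hcof] at hmk
  obtain ⟨d⟩ := Cardinal.denumerable_iff.mpr hmk
  let e : ι ≃ ℕ := @Denumerable.eqv ι d
  set g : ℕ → Ordinal := g0 ∘ e.symm with hg
  have hglt : ∀ n, g n < α := fun n => hlsub ▸ Ordinal.lt_lsub g0 (e.symm n)
  have hgunb : ∀ b < α, ∃ n, b ≤ g n := by
    intro b hb
    rw [← hlsub, Ordinal.lt_lsub_iff] at hb
    obtain ⟨i, hi⟩ := hb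
    exact ⟨e i, by simpa [hg] using hi⟩
  -- a strictly increasing cofinal sequence
  set a : ℕ → Ordinal := fun n => Nat.rec (g 0) (fun n ih => max (g (n + 1)) (ih + 1)) n
    with ha
  have halt : ∀ n, a n < α := by
    intro n
    induction n with
    | zero => exact hglt 0
    | succ n ih => exact max_lt (hglt (n + 1)) (hα.succ_lt ih)
  have hamono : StrictMono a := by
    apply strictMono_nat_of_lt_succ
    intro n
    calc a n < a n + 1 := by rw [add_one_eq_succ]; exact Order.lt_succ _
    _ ≤ max (g (n + 1)) (a n + 1) := le_max_right _ _
  have haunb : ∀ b < α, ∃ N, b < a N := by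
    intro b hb
    obtain ⟨n, hn⟩ := hgunb b hb
    refine ⟨n + 1, ?_⟩
    have : g n ≤ a n := by
      cases n with
      | zero => exact le_rfl
      | succ m => exact le_max_left _ _
    calc b ≤ a n := hn.trans this
    _ < a (n + 1) := hamono (Nat.lt_succ_self n)
  -- basic facts
  have h1le : ∀ n, a n + 1 ≤ α := fun n => (hα.succ_lt (halt n)).le
  have h2lt : ∀ n, a n + 2 < α := by
    intro n
    have : a n + 2 = (a n + 1) + 1 := by rw [add_assoc]; norm_num
    rw [this]
    exact hα.succ_lt (hα.succ_lt (halt n))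
  have h2le : ∀ n, a n + 2 ≤ α := fun n => (h2lt n).le
  have hne12 : ∀ n, a n + 1 ≠ a n + 2 := by
    intro n h
    have := (add_left_cancel_iff (a := a n)).mp h
    norm_num at this
  set p : ℕ → Set.Iic α := fun n => ⟨a n + 1, h1le n⟩ with hp
  set q : ℕ → Set.Iic α := fun n => ⟨a n + 2, h2le n⟩ with hq
  have hpq : ∀ n, p n ≠ q n := fun n h => hne12 n (Subtype.ext_iff.mp h)
  have hopenp : ∀ n, IsOpen ({p n} : Set (Set.Iic α)) :=
    fun n => isOpen_singleton_succ_aux (h1le n)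
  have hopenq : ∀ n, IsOpen ({q n} : Set (Set.Iic α)) := by
    intro n
    have h2 : a n + 2 = (a n + 1) + 1 := by rw [add_assoc]; norm_num
    have : q n = ⟨(a n + 1) + 1, h2 ▸ h2le n⟩ := Subtype.ext h2
    rw [this]
    exact isOpen_singleton_succ_aux _
  -- the homeomorphisms
  set F : ℕ → (Set.Iic α ≃ₜ Set.Iic α) := fun n =>
    { toEquiv := Equiv.swap (p n) (q n)
      continuous_toFun := swap_continuous_aux (hopenp n) (hopenq n)
      continuous_invFun := by
        show Continuous ⇑(Equiv.swap (p n) (q n)).symm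
        rw [Equiv.symm_swap]
        exact swap_continuous_aux (hopenp n) (hopenq n) } with hF
  have hform : ∀ n (x : Set.Iic α),
      (F n x : Ordinal) = if (x : Ordinal) = a n + 1 then a n + 2
        else if (x : Ordinal) = a n + 2 then a n + 1 else (x : Ordinal) := by
    intro n x
    rcases eq_or_ne (x : Ordinal) (a n + 1) with h1 | h1
    · have hx : x = p n := Subtype.ext h1
      rw [if_pos h1]
      show ((Equiv.swap (p n) (q n)) x : Ordinal) = a n + 2
      rw [hx, Equiv.swap_apply_left]
    · rcases eq_or_ne (x : Ordinal) (a n + 2) with h2 | h2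
      · have hx : x = q n := Subtype.ext h2
        rw [if_neg h1, if_pos h2]
        show ((Equiv.swap (p n) (q n)) x : Ordinal) = a n + 1
        rw [hx, Equiv.swap_apply_right]
      · have hx1 : x ≠ p n := fun h => h1 (Subtype.ext_iff.mp h)
        have hx2 : x ≠ q n := fun h => h2 (Subtype.ext_iff.mp h)
        rw [if_neg h1, if_neg h2]
        show ((Equiv.swap (p n) (q n)) x : Ordinal) = (x : Ordinal)
        rw [Equiv.swap_apply_of_ne_of_ne hx1 hx2]
  refine ⟨F, ?_, ?_, ?_, ?_⟩
  · -- injective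
    intro m n h
    have hval : (F m (p m) : Ordinal) = (F n (p m) : Ordinal) := by rw [h]
    rw [hform m (p m), hform n (p m)] at hval
    simp only [hp] at hval
    simp only [if_true] at hval
    by_contra hmn
    have hamn : a m ≠ a n := fun h' => hmn (hamono.injective h')
    rcases eq_or_ne (a m + 1 : Ordinal) (a n + 1) with h1 | h1
    · exact hamn (by
        rw [add_one_eq_succ, add_one_eq_succ] at h1
        exact Order.succ_eq_succ_iff.mp h1)
    · rw [if_neg h1] at hval
      rcases eq_or_ne (a m + 1 : Ordinal) (a n + 2) with h2 | h2
      · rw [if_pos h2] at hval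
        -- a m + 2 = a n + 1 and a m + 1 = a n + 2
        have e1 : a m + 2 = (a m + 1) + 1 := by rw [add_assoc]; norm_num
        rw [e1, h2] at hval
        -- (a n + 2) + 1 = a n + 1
        have : a n + 3 = a n + 1 := by
          rw [show (a n : Ordinal) + 3 = (a n + 2) + 1 by rw [add_assoc]; norm_num]
          exact hval
        have := (add_left_cancel_iff (a := a n)).mp this
        norm_num at this
      · rw [if_neg h2] at hval
        have := (add_left_cancel_iff (a := a m)).mp hval
        norm_num at this
  · -- transpositions
    intro n
    exact ⟨a n, halt n, hform n⟩
  · -- not identity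
    intro n h
    have : (F n (p n) : Ordinal) = a n + 1 := by
      rw [h]; rfl
    rw [hform n (p n)] at this
    simp only [hp] at this
    simp only [if_true] at this
    exact hne12 n this.symm
  · -- convergence
    intro U hU
    have hdiag : Set.diagonal (Set.Iic α) ⊆ U := subset_of_mem_nhdsSet hU
    set t : Set.Iic α := ⟨α, Set.self_mem_Iic⟩ with ht
    have hU' : U ∈ nhds (t, t) := nhds_le_nhdsSet (Set.mem_diagonal t) hU
    rw [nhds_prod_eq] at hU'
    obtain ⟨V, hV, W, hW, hVW⟩ := Filter.mem_prod_iff.mp hU'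
    rw [nhds_subtype] at hV hW
    obtain ⟨V', hV', hVsub⟩ := hV
    obtain ⟨W', hW', hWsub⟩ := hW
    obtain ⟨b₁, hb₁, hIV⟩ := exists_Ioc_subset_of_mem_nhds hV' ⟨0, hα.pos⟩
    obtain ⟨b₂, hb₂, hIW⟩ := exists_Ioc_subset_of_mem_nhds hW' ⟨0, hα.pos⟩
    obtain ⟨N, hN⟩ := haunb (max b₁ b₂) (max_lt hb₁ hb₂)
    refine ⟨N, fun n hn x => ?_⟩
    have han : max b₁ b₂ < a n := hN.trans_le (hamono.monotone hn)
    have hmemV : ∀ y : Set.Iic α, a n < (y : Ordinal) → y ∈ V := by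
      intro y hy
      exact hVsub (hIV ⟨(le_max_left b₁ b₂).trans_lt (han.trans hy), y.2⟩)
    have hmemW : ∀ y : Set.Iic α, a n < (y : Ordinal) → y ∈ W := by
      intro y hy
      exact hWsub (hIW ⟨(le_max_right b₁ b₂).trans_lt (han.trans hy), y.2⟩)
    have hlt1 : a n < a n + 1 := by rw [add_one_eq_succ]; exact Order.lt_succ _
    have hlt2 : a n < a n + 2 := hlt1.trans_le (by
      rw [show (a n : Ordinal) + 2 = (a n + 1) + 1 by rw [add_assoc]; norm_num,
        add_one_eq_succ]
      exact (Order.lt_succ _).le)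
    rcases eq_or_ne x (p n) with hx | hx
    · have : F n x = q n := by
        rw [hx]; exact Equiv.swap_apply_left _ _
      rw [this, hx]
      exact hVW ⟨hmemV (q n) hlt2, hmemW (p n) hlt1⟩
    · rcases eq_or_ne x (q n) with hx2 | hx2
      · have : F n x = p n := by
          rw [hx2]; exact Equiv.swap_apply_right _ _
        rw [this, hx2]
        exact hVW ⟨hmemV (p n) hlt1, hmemW (q n) hlt2⟩
      · have : F n x = x := Equiv.swap_apply_of_ne_of_ne hx hx2
        rw [this]
        exact hdiag rfl
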